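/- For the wreath product ℤ ≀ ℤ with standard generating set S = {t, a₀}, there is a constant c > 0 such that the residual finiteness growth satisfies rf_{ℤ≀ℤ, S}(n) ≤ c·n² for all n ≥ 1. -/

import Mathlib

/-- The base group `⊕_{ℤ} ℤ` of `ℤ ≀ ℤ`, written multiplicatively. -/
abbrev Base := Multiplicative (ℤ →₀ ℤ)

/-- The shift automorphism of the base group of `ℤ ≀ ℤ`. -/
def shiftEquiv (k : ℤ) : (ℤ →₀ ℤ) ≃+ (ℤ →₀ ℤ) := Finsupp.domCongr (Equiv.addRight k)

/-- The shift action of `ℤ` on the base group of `ℤ ≀ ℤ`. -/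
noncomputable def shiftHom : Multiplicative ℤ →* MulAut Base :=
  MonoidHom.mk' (fun k => AddEquiv.toMultiplicative (shiftEquiv k.toAdd)) (by
    intro x y
    apply MulEquiv.ext
    intro fm
    apply Multiplicative.toAdd.injective
    ext b
    simp [shiftEquiv, Finsupp.domCongr_apply, Finsupp.equivMapDomain_apply,
      Equiv.Perm.mul_def, sub_sub]
    ring_nf)

/-- The wreath product `ℤ ≀ ℤ = (⊕_{ℤ} ℤ) ⋊ ℤ`. -/
abbrev W := SemidirectProduct Base (Multiplicative ℤ) shiftHom

/-- The generator `t` (the shift) of `ℤ ≀ ℤ`. -/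
noncomputable def tElt : W := SemidirectProduct.inr (Multiplicative.ofAdd 1)
/-- The generator `a₀` (the generator of the `0`-th coordinate) of `ℤ ≀ ℤ`. -/
noncomputable def aElt : W := SemidirectProduct.inl (Multiplicative.ofAdd (Finsupp.single 0 1))



noncomputable def evalHom (p : ℕ) (r : (ZMod p)ˣ) : (ℤ →₀ ℤ) →+ ZMod p :=
  Finsupp.liftAddHom (fun i => zmultiplesHom (ZMod p) ((r ^ i : (ZMod p)ˣ) : ZMod p))

lemma evalHom_single (p : ℕ) (r : (ZMod p)ˣ) (i : ℤ) (m : ℤ) :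
    evalHom p r (Finsupp.single i m) = m • ((r ^ i : (ZMod p)ˣ) : ZMod p) := by
  rw [evalHom, Finsupp.liftAddHom_apply_single]; rfl

lemma evalHom_shift (p : ℕ) (r : (ZMod p)ˣ) (k : ℤ) (f : ℤ →₀ ℤ) :
    evalHom p r (shiftEquiv k f) = ((r ^ k : (ZMod p)ˣ) : ZMod p) * evalHom p r f := by
  have h : (evalHom p r).comp (shiftEquiv k).toAddMonoidHom =
      (AddMonoidHom.mulLeft ((r ^ k : (ZMod p)ˣ) : ZMod p)).comp (evalHom p r) := by
    apply Finsupp.addHom_ext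
    intro i m
    show evalHom p r (shiftEquiv k (Finsupp.single i m)) = _
    rw [show shiftEquiv k (Finsupp.single i m) = Finsupp.single (i + k) m from
      Finsupp.equivMapDomain_single _ _ _, evalHom_single]
    show _ = ((r ^ k : (ZMod p)ˣ) : ZMod p) * evalHom p r (Finsupp.single i m)
    rw [evalHom_single, zsmul_eq_mul, zsmul_eq_mul, zpow_add]
    push_cast
    ring
  exact DFunLike.congr_fun h f

def unitsAct (p : ℕ) : (ZMod p)ˣ →* MulAut (Multiplicative (ZMod p)) :=
  MonoidHom.mk' (fun u => AddEquiv.toMultiplicative (DistribMulAction.toAddAut (ZMod p)ˣ (ZMod p) u))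
    (by intro u v; ext x; simp [mul_smul])

abbrev H (p : ℕ) := SemidirectProduct (Multiplicative (ZMod p)) (ZMod p)ˣ (unitsAct p)

noncomputable def wHom (p : ℕ) (r : (ZMod p)ˣ) : W →* H p :=
  SemidirectProduct.lift
    (SemidirectProduct.inl.comp (AddMonoidHom.toMultiplicative (evalHom p r)))
    (SemidirectProduct.inr.comp (zpowersHom (ZMod p)ˣ r))
    (by
      intro k
      apply MonoidHom.ext
      intro m
      show SemidirectProduct.inl (AddMonoidHom.toMultiplicative (evalHom p r) (shiftHom k m))
        = MulAut.conj (SemidirectProduct.inr ((zpowersHom (ZMod p)ˣ r) k))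
            (SemidirectProduct.inl (AddMonoidHom.toMultiplicative (evalHom p r) m))
      rw [MulAut.conj_apply, ← map_inv, ← SemidirectProduct.inl_aut]
      congr 1
      apply Multiplicative.toAdd.injective
      show evalHom p r (shiftEquiv k.toAdd m.toAdd) = _
      rw [evalHom_shift]
      show _ = ((zpowersHom (ZMod p)ˣ r) k) • (evalHom p r m.toAdd)
      rw [Units.smul_def, smul_eq_mul]
      rfl)

lemma exists_good_unit (p n : ℕ) (hp : p.Prime) (h2n : 2 * n + 2 < p)
    (f : ℤ →₀ ℤ) (i₀ : ℤ) (hi₀ : f i₀ ≠ 0)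
    (hsupp : ∀ i, f i ≠ 0 → |i| ≤ (n : ℤ)) (hval : ∀ i, |f i| ≤ (n : ℤ)) :
    ∃ r : (ZMod p)ˣ, evalHom p r f ≠ 0 := by
  haveI : Fact p.Prime := ⟨hp⟩
  have hcast : ∀ i, f i ≠ 0 → ((f i : ZMod p)) ≠ 0 := by
    intro i hi hzero
    rw [ZMod.intCast_zmod_eq_zero_iff_dvd] at hzero
    have h1 := Int.le_of_dvd (abs_pos.mpr hi) ((dvd_abs _ _).mpr hzero)
    have h2 := hval i
    omega
  set P : Polynomial (ZMod p) :=
    f.support.sum (fun i => Polynomial.monomial (i + n).toNat ((f i : ZMod p))) with hP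
  have hcoeff : P.coeff ((i₀ + n).toNat) = (f i₀ : ZMod p) := by
    rw [hP, Polynomial.finset_sum_coeff]
    rw [Finset.sum_eq_single i₀]
    · simp [Polynomial.coeff_monomial]
    · intro i hi hne
      rw [Polynomial.coeff_monomial, if_neg]
      intro heq
      have h1 : |i| ≤ (n : ℤ) := hsupp i (Finsupp.mem_support_iff.mp hi)
      have h2 : |i₀| ≤ (n : ℤ) := hsupp i₀ hi₀
      rw [abs_le] at h1 h2
      omega
    · intro h
      exact absurd (Finsupp.mem_support_iff.mpr hi₀) h
  have hPne : P ≠ 0 := fun h => hcast i₀ hi₀ (by rw [← hcoeff, h, Polynomial.coeff_zero])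
  have hdeg : P.natDegree ≤ 2 * n := by
    apply Polynomial.natDegree_sum_le_of_forall_le
    intro i hi
    refine le_trans (Polynomial.natDegree_monomial_le _) ?_
    have := hsupp i (Finsupp.mem_support_iff.mp hi)
    rw [abs_le] at this
    omega
  have heval : ∀ r : (ZMod p)ˣ, Polynomial.eval (r : ZMod p) P
      = evalHom p r f * ((r ^ (n : ℤ) : (ZMod p)ˣ) : ZMod p) := by
    intro r
    rw [hP, Polynomial.eval_finset_sum]
    have hE : evalHom p r f = f.support.sum (fun i => (f i : ZMod p) * ((r ^ i : (ZMod p)ˣ) : ZMod p)) := by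
      rw [evalHom, Finsupp.liftAddHom_apply, Finsupp.sum]
      refine Finset.sum_congr rfl (fun i _ => ?_)
      show (f i) • ((r ^ i : (ZMod p)ˣ) : ZMod p) = _
      rw [zsmul_eq_mul]
    rw [hE, Finset.sum_mul]
    refine Finset.sum_congr rfl (fun i hi => ?_)
    rw [Polynomial.eval_monomial]
    have hge : (0 : ℤ) ≤ i + n := by
      have := hsupp i (Finsupp.mem_support_iff.mp hi); rw [abs_le] at this; omega
    have : ((r : ZMod p)) ^ ((i + n).toNat) = ((r ^ (i + (n : ℤ)) : (ZMod p)ˣ) : ZMod p) := by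
      rw [← Units.val_pow_eq_pow_val, ← zpow_natCast, Int.toNat_of_nonneg hge]
    rw [this, zpow_add]
    push_cast
    ring
  by_contra hcon
  push_neg at hcon
  have hroots : ∀ r : (ZMod p)ˣ, (r : ZMod p) ∈ P.roots := by
    intro r
    rw [Polynomial.mem_roots hPne]
    show Polynomial.eval _ P = 0
    rw [heval r, hcon r, zero_mul]
  have hinj : Function.Injective (fun r : (ZMod p)ˣ => (r : ZMod p)) := fun a b h => Units.ext h
  have hcard : Fintype.card (ZMod p)ˣ ≤ Multiset.card P.roots := by
    have h1 : (Finset.univ.image (fun r : (ZMod p)ˣ => (r : ZMod p))) ⊆ P.roots.toFinset := by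
      intro x hx
      rw [Finset.mem_image] at hx
      obtain ⟨r, _, rfl⟩ := hx
      rw [Multiset.mem_toFinset]
      exact hroots r
    calc Fintype.card (ZMod p)ˣ
        = (Finset.univ.image (fun r : (ZMod p)ˣ => (r : ZMod p))).card := by
          rw [Finset.card_image_of_injective _ hinj, Finset.card_univ]
      _ ≤ P.roots.toFinset.card := Finset.card_le_card h1
      _ ≤ Multiset.card P.roots := Multiset.toFinset_card_le _
  have hcu : Fintype.card (ZMod p)ˣ = p - 1 := by
    rw [ZMod.card_units_eq_totient, Nat.totient_prime hp]
  have := P.card_roots'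
  omega

lemma mul_left_apply (x y : W) (i : ℤ) :
    Multiplicative.toAdd ((x * y).left) i =
      Multiplicative.toAdd x.left i + Multiplicative.toAdd y.left (i - Multiplicative.toAdd x.right) := by
  show Multiplicative.toAdd (x.left * (shiftHom x.right) y.left) i = _
  have : Multiplicative.toAdd (x.left * (shiftHom x.right) y.left)
      = Multiplicative.toAdd x.left + shiftEquiv (Multiplicative.toAdd x.right) (Multiplicative.toAdd y.left) := rfl
  rw [this]
  simp [shiftEquiv, Finsupp.domCongr_apply, Finsupp.equivMapDomain_apply, sub_eq_add_neg]

lemma mul_right_toAdd (x y : W) :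
    Multiplicative.toAdd ((x * y).right) = Multiplicative.toAdd x.right + Multiplicative.toAdd y.right := rfl

lemma tElt_left : Multiplicative.toAdd tElt.left = 0 := rfl
lemma tElt_right : Multiplicative.toAdd tElt.right = 1 := rfl
lemma tinv_left : Multiplicative.toAdd (tElt⁻¹).left = 0 := by
  simp [tElt, SemidirectProduct.inv_left]
lemma tinv_right : Multiplicative.toAdd (tElt⁻¹).right = -1 := rfl
lemma aElt_left : Multiplicative.toAdd aElt.left = Finsupp.single 0 1 := rfl
lemma aElt_right : Multiplicative.toAdd aElt.right = 0 := rfl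
lemma ainv_left : Multiplicative.toAdd (aElt⁻¹).left = -Finsupp.single 0 1 := by
  simp [aElt, SemidirectProduct.inv_left]
lemma ainv_right : Multiplicative.toAdd (aElt⁻¹).right = 0 := rfl

lemma gen_bounds (x : W) (hx : x = tElt ∨ x = tElt⁻¹ ∨ x = aElt ∨ x = aElt⁻¹) :
    |Multiplicative.toAdd x.right| ≤ 1 ∧ (∀ i, |Multiplicative.toAdd x.left i| ≤ 1) ∧
      (∀ i, Multiplicative.toAdd x.left i ≠ 0 → i = 0) := by
  rcases hx with rfl | rfl | rfl | rfl
  · rw [tElt_right]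
    refine ⟨by norm_num, fun i => ?_, fun i hi => ?_⟩
    · rw [tElt_left]; norm_num
    · rw [tElt_left] at hi; simp at hi
  · rw [tinv_right]
    refine ⟨by norm_num, fun i => ?_, fun i hi => ?_⟩
    · rw [tinv_left]; norm_num
    · rw [tinv_left] at hi; simp at hi
  · rw [aElt_right]
    refine ⟨by norm_num, fun i => ?_, fun i hi => ?_⟩
    · rw [aElt_left]
      rcases eq_or_ne i 0 with rfl | h
      · rw [Finsupp.single_eq_same]; norm_num
      · rw [Finsupp.single_eq_of_ne' (Ne.symm h)]; norm_num
    · rw [aElt_left] at hi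
      by_contra h
      exact hi (Finsupp.single_eq_of_ne' (Ne.symm h))
  · rw [ainv_right]
    refine ⟨by norm_num, fun i => ?_, fun i hi => ?_⟩
    · rw [ainv_left]
      rcases eq_or_ne i 0 with rfl | h
      · rw [Finsupp.coe_neg, Pi.neg_apply, Finsupp.single_eq_same]; norm_num
      · rw [Finsupp.coe_neg, Pi.neg_apply, Finsupp.single_eq_of_ne' (Ne.symm h)]; norm_num
    · rw [ainv_left] at hi
      by_contra h
      apply hi
      rw [Finsupp.coe_neg, Pi.neg_apply, Finsupp.single_eq_of_ne' (Ne.symm h), neg_zero]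

lemma prod_bounds : ∀ L : List W, (∀ x ∈ L, x = tElt ∨ x = tElt⁻¹ ∨ x = aElt ∨ x = aElt⁻¹) →
    |Multiplicative.toAdd (L.prod.right)| ≤ (L.length : ℤ) ∧
    (∀ i, |Multiplicative.toAdd (L.prod.left) i| ≤ (L.length : ℤ)) ∧
    (∀ i, Multiplicative.toAdd (L.prod.left) i ≠ 0 → |i| ≤ (L.length : ℤ))
  | [], _ => by
      refine ⟨by simp, fun i => by simp, fun i hi => absurd ?_ hi⟩
      simp
  | x :: L, h => by
      obtain ⟨h1, h2, h3⟩ := prod_bounds L (fun y hy => h y (List.mem_cons_of_mem _ hy))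
      obtain ⟨g1, g2, g3⟩ := gen_bounds x (h x (List.mem_cons_self))
      rw [List.prod_cons]
      have hlen : ((x :: L).length : ℤ) = (L.length : ℤ) + 1 := by push_cast [List.length_cons]; ring
      rw [hlen]
      refine ⟨?_, fun i => ?_, fun i hi => ?_⟩
      · rw [mul_right_toAdd]
        have := abs_add_le (Multiplicative.toAdd x.right) (Multiplicative.toAdd (L.prod.right))
        omega
      · rw [mul_left_apply]
        have ha := abs_add_le (Multiplicative.toAdd x.left i)
          (Multiplicative.toAdd (L.prod.left) (i - Multiplicative.toAdd x.right))
        have := g2 i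
        have := h2 (i - Multiplicative.toAdd x.right)
        omega
      · rw [mul_left_apply] at hi
        rcases eq_or_ne (Multiplicative.toAdd x.left i) 0 with hz | hz
        · have hz2 : Multiplicative.toAdd (L.prod.left) (i - Multiplicative.toAdd x.right) ≠ 0 := by
            intro h0; apply hi; rw [hz, h0]; ring
          have := h3 _ hz2
          rw [abs_le] at this g1 ⊢
          omega
        · have := g3 i hz
          rw [abs_le]
          omega

def hEquiv (p : ℕ) : H p ≃ (Multiplicative (ZMod p) × (ZMod p)ˣ) where
  toFun x := (x.left, x.right)
  invFun y := ⟨y.1, y.2⟩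
  left_inv x := by cases x; rfl
  right_inv y := rfl

instance finiteH (p : ℕ) [NeZero p] : Finite (H p) := Finite.of_equiv _ (hEquiv p).symm

lemma card_H (p : ℕ) [NeZero p] : Nat.card (H p) ≤ p * p := by
  rw [Nat.card_congr (hEquiv p), Nat.card_prod]
  have h1 : Nat.card (Multiplicative (ZMod p)) = p := by
    rw [Nat.card_eq_fintype_card, Fintype.card_multiplicative]; exact ZMod.card p
  have h2 : Nat.card (ZMod p)ˣ ≤ p := by
    have := Nat.card_le_card_of_injective (fun u : (ZMod p)ˣ => (u : ZMod p))
      (fun a b hab => Units.ext hab)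
    rwa [Nat.card_eq_fintype_card (α := ZMod p), ZMod.card] at this
  rw [h1]
  exact Nat.mul_le_mul_left p h2

lemma ker_works {G : Type} [Group G] [Finite G] (φ : W →* G) (g : W) (hg : φ g ≠ 1) :
    (φ.ker).Normal ∧ g ∉ φ.ker ∧ (φ.ker).FiniteIndex ∧ (φ.ker).index ≤ Nat.card G := by
  have hidx : (φ.ker).index = Nat.card φ.range := Subgroup.index_ker φ
  have hle : Nat.card φ.range ≤ Nat.card G :=
    Nat.card_le_card_of_injective _ Subtype.val_injective
  have hpos : 0 < Nat.card φ.range := Nat.card_pos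
  refine ⟨inferInstance, fun h => hg (MonoidHom.mem_ker.mp h), ⟨by omega⟩, by omega⟩

/-- The residual finiteness growth of `ℤ ≀ ℤ` with respect to
`S = {t, a₀}` is at most `c·n²`: every nontrivial element of word norm at most `n`
survives in a finite quotient of order at most `c·n²`. -/
theorem stmt_3 : ∃ c : ℕ, 0 < c ∧ ∀ n : ℕ, 1 ≤ n → ∀ g : W, g ≠ 1 →
    (∃ L : List W, L.length ≤ n ∧
      (∀ x ∈ L, x = tElt ∨ x = tElt⁻¹ ∨ x = aElt ∨ x = aElt⁻¹) ∧ L.prod = g) →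
    ∃ N : Subgroup W, N.Normal ∧ g ∉ N ∧ N.FiniteIndex ∧ N.index ≤ c * n ^ 2 := by
  refine ⟨64, by norm_num, ?_⟩
  rintro n hn g hg ⟨L, hlenL, hgen, hprod⟩
  obtain ⟨h1, h2, h3⟩ := prod_bounds L hgen
  rw [hprod] at h1 h2 h3
  have hlen' : (L.length : ℤ) ≤ (n : ℤ) := by exact_mod_cast hlenL
  by_cases hk : Multiplicative.toAdd g.right = 0
  · -- torus case: right part trivial, left part nonzero
    have hgr : g.right = 1 := by
      apply Multiplicative.toAdd.injective; exact hk
    have hgl : g = SemidirectProduct.inl g.left := by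
      conv_lhs => rw [← SemidirectProduct.inl_left_mul_inr_right g]
      rw [hgr, map_one, mul_one]
    have hfne : Multiplicative.toAdd g.left ≠ 0 := by
      intro h0
      apply hg
      have : g.left = 1 := Multiplicative.toAdd.injective h0
      rw [hgl, this, map_one]
    obtain ⟨i₀, hi₀⟩ : ∃ i, Multiplicative.toAdd g.left i ≠ 0 := by
      by_contra hc
      push_neg at hc
      exact hfne (Finsupp.ext hc)
    obtain ⟨p, hpprime, hp1, hp2⟩ := Nat.exists_prime_lt_and_le_two_mul (2 * n + 2) (by omega)
    haveI : NeZero p := ⟨hpprime.ne_zero⟩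
    obtain ⟨r, hr⟩ := exists_good_unit p n hpprime (by omega) (Multiplicative.toAdd g.left) i₀ hi₀
      (fun i hi => le_trans (h3 i hi) hlen') (fun i => le_trans (h2 i) hlen')
    have hne1 : wHom p r g ≠ 1 := by
      rw [hgl, wHom, SemidirectProduct.lift_inl]
      intro hc
      apply hr
      have h1' : AddMonoidHom.toMultiplicative (evalHom p r) g.left = 1 :=
        SemidirectProduct.inl_injective (by rw [map_one]; exact hc)
      exact congrArg Multiplicative.toAdd h1'
    obtain ⟨hN, hgN, hFI, hidx⟩ := ker_works (wHom p r) g hne1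
    refine ⟨(wHom p r).ker, hN, hgN, hFI, le_trans hidx (le_trans (card_H p) ?_)⟩
    have hp3 : p ≤ 4 * n + 4 := by omega
    calc p * p ≤ (4 * n + 4) * (4 * n + 4) := Nat.mul_le_mul hp3 hp3
      _ ≤ 64 * n ^ 2 := by nlinarith
  · -- shift case: right part nonzero
    haveI : NeZero (n + 1) := ⟨Nat.succ_ne_zero n⟩
    set χ : W →* Multiplicative (ZMod (n + 1)) :=
      (AddMonoidHom.toMultiplicative (Int.castAddHom (ZMod (n + 1)))).comp
        SemidirectProduct.rightHom with hχdef
    have hχ : χ g ≠ 1 := by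
      intro hc
      have hc' : ((Multiplicative.toAdd g.right : ℤ) : ZMod (n + 1)) = 0 :=
        congrArg Multiplicative.toAdd hc
      rw [ZMod.intCast_zmod_eq_zero_iff_dvd] at hc'
      have hd := Int.le_of_dvd (abs_pos.mpr hk) ((dvd_abs _ _).mpr hc')
      have : ((n : ℤ) + 1) ≤ |Multiplicative.toAdd g.right| := by exact_mod_cast hd
      omega
    obtain ⟨hN, hgN, hFI, hidx⟩ := ker_works χ g hχ
    refine ⟨χ.ker, hN, hgN, hFI, le_trans hidx ?_⟩
    have : Nat.card (Multiplicative (ZMod (n + 1))) = n + 1 := by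
      rw [Nat.card_eq_fintype_card, Fintype.card_multiplicative]; exact ZMod.card (n + 1)
    rw [this]
    nlinarith
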